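/- The Artinian algebra C = K[y_1,...,y_n]/(y_1^2,...,y_n^2, y_1 y_2 ⋯ y_{n-1}) (the initial ideal of the AOT algebra of the n-cycle) has the Weak Lefschetz Property for char K = 0. -/

import Mathlib

open MvPolynomial

/-- The degree-`n` graded piece of the quotient of a polynomial ring by a
(homogeneous) ideal: the image of the homogeneous degree-`n` polynomials. -/
noncomputable def gradedPiece {K σ : Type*} [Field K] (I : Ideal (MvPolynomial σ K))
    (n : ℕ) : Submodule K (MvPolynomial σ K ⧸ I) :=
  Submodule.map (Ideal.Quotient.mkₐ K I).toLinearMap (homogeneousSubmodule σ K n)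

/-- The ideal `(y_1^2, …, y_n^2, y_1 y_2 ⋯ y_{n-1})`, the initial ideal of the
Artinian Orlik–Terao ideal of the `n`-cycle. -/
noncomputable def cycleInitIdeal (K : Type*) [Field K] (n : ℕ) :
    Ideal (MvPolynomial (Fin n) K) :=
  Ideal.span ((Set.range fun k : Fin n => (X k : MvPolynomial (Fin n) K) ^ 2) ∪
    {∏ k ∈ Finset.univ.filter (fun k : Fin n => (k : ℕ) < n - 1), X k})

namespace CycleWLP

variable {K : Type*} [Field K] {n : ℕ}

/-- The face model: functions from subsets of `Fin n` to `K`. -/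
abbrev M (K : Type*) (n : ℕ) := Finset (Fin n) → K

/-- The up (multiplication by `∑ y_i`) operator on the face model. -/
def up (x : M K n) : M K n := fun T => ∑ j ∈ T, x (T.erase j)

/-- The down operator on the face model. -/
def down (x : M K n) : M K n := fun S => ∑ j ∈ Sᶜ, x (insert j S)

/-- `x` is supported in degree `i`. -/
def IsDeg (i : ℕ) (x : M K n) : Prop := ∀ S : Finset (Fin n), S.card ≠ i → x S = 0

lemma up_zero : up (0 : M K n) = 0 := by
  funext T; simp [up]

lemma up_smul (c : K) (x : M K n) : up (c • x) = c • up x := by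
  funext T; simp [up, Finset.mul_sum]

lemma down_smul (c : K) (x : M K n) : down (c • x) = c • down x := by
  funext S; simp [down, Finset.mul_sum]

lemma comm_pointwise (x : M K n) (S : Finset (Fin n)) :
    down (up x) S + S.card • x S = up (down x) S + Sᶜ.card • x S := by
  have h1 : down (up x) S
      = (∑ j ∈ Sᶜ, x S + ∑ j ∈ Sᶜ, ∑ k ∈ S, x (insert j (S.erase k))) := by
    rw [down, ← Finset.sum_add_distrib]
    refine Finset.sum_congr rfl fun j hj => ?_
    have hjS : j ∉ S := Finset.mem_compl.mp hj
    rw [up, Finset.sum_insert hjS, Finset.erase_insert hjS]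
    congr 1
    refine Finset.sum_congr rfl fun k hk => ?_
    have : j ≠ k := fun h => hjS (h ▸ hk)
    rw [Finset.erase_insert_of_ne this]
  have h2 : up (down x) S
      = (∑ k ∈ S, x S + ∑ k ∈ S, ∑ j ∈ Sᶜ, x (insert j (S.erase k))) := by
    rw [up, ← Finset.sum_add_distrib]
    refine Finset.sum_congr rfl fun k hk => ?_
    have hk' : k ∉ (S.erase k)ᶜᶜ := by simp
    rw [down]
    have hcompl : (S.erase k)ᶜ = insert k Sᶜ := by
      ext a
      simp only [Finset.mem_compl, Finset.mem_erase, Finset.mem_insert]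
      tauto
    rw [hcompl, Finset.sum_insert (by simp [hk]), Finset.insert_erase hk]
  rw [h1, h2, Finset.sum_const, Finset.sum_const]
  have := Finset.sum_comm (s := Sᶜ) (t := S) (f := fun j k => x (insert j (S.erase k)))
  rw [this]
  simp [add_comm, add_left_comm, add_assoc]

/-- Degree tracking for iterated `down`. -/
lemma isdeg_down_iter {i : ℕ} {x : M K n} (hx : ∀ S : Finset (Fin n), x S ≠ 0 → S.card = i) :
    ∀ k, ∀ S : Finset (Fin n), (down^[k] x) S ≠ 0 → S.card + k = i := by
  intro k
  induction k with
  | zero => intro S hS; simpa using hx S (by simpa using hS)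
  | succ k ih =>
    intro S hS
    rw [Function.iterate_succ_apply'] at hS
    obtain ⟨j, hj, hne⟩ := Finset.exists_ne_zero_of_sum_ne_zero hS
    have := ih _ hne
    rw [Finset.card_insert_of_notMem (Finset.mem_compl.mp hj)] at this
    omega

lemma card_compl_eq (S : Finset (Fin n)) : S.card + Sᶜ.card = n := by
  simpa using Finset.card_add_card_compl S

lemma key_iter {i lam : ℕ} (hlam : n = lam + 2 * i) {x : M K n}
    (hx : ∀ S : Finset (Fin n), x S ≠ 0 → S.card = i) (hup : up x = 0) :
    ∀ k, up (down^[k + 1] x)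
      = (-(((k + 1) * (lam + k) : ℕ) : K)) • down^[k] x := by
  intro k
  induction k with
  | zero =>
    funext S
    simp only [zero_add, Function.iterate_one, Function.iterate_zero, id_eq,
      Pi.smul_apply, smul_eq_mul]
    have hcomm := comm_pointwise x S
    have h0 : down (up x) S = 0 := by rw [hup]; simp [down]
    rw [h0] at hcomm
    by_cases hxS : x S = 0
    · have : up (down x) S = 0 := by simpa [hxS] using hcomm.symm
      simp [this, hxS]
    · have hcard : S.card = i := hx S hxS
      have e2 : Sᶜ.card = lam + i := by
        have := card_compl_eq S; omega
      rw [hcard, e2] at hcomm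
      push_cast [nsmul_eq_mul] at hcomm ⊢
      linear_combination hcomm.symm
  | succ k ih =>
    funext S
    set w := down^[k + 1] x with hw
    have hcomm := comm_pointwise w S
    have hdw : down (up w) = (-(((k + 1) * (lam + k) : ℕ) : K)) • w := by
      rw [ih, down_smul, hw, Function.iterate_succ_apply']
    have hstep : up (down^[k + 1 + 1] x) S = up (down w) S := by
      rw [hw, Function.iterate_succ_apply']
    rw [hstep]
    by_cases hwS : w S = 0
    · have : up (down w) S = 0 := by
        rw [hdw] at hcomm
        simpa [hwS] using hcomm.symm
      simp [this, hwS]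
    · have hcard : S.card + (k + 1) = i := isdeg_down_iter hx (k + 1) S hwS
      have e2 : Sᶜ.card = lam + S.card + 2 * k + 2 := by
        have := card_compl_eq S; omega
      rw [hdw] at hcomm
      rw [e2] at hcomm
      simp only [Pi.smul_apply, smul_eq_mul] at hcomm ⊢
      push_cast [nsmul_eq_mul] at hcomm ⊢
      linear_combination hcomm.symm

/-- Injectivity of `up` in low degrees, over a char-zero field. -/
lemma up_inj [CharZero K] {i : ℕ} (hi : 2 * i < n) {x : M K n}
    (hx : ∀ S : Finset (Fin n), x S ≠ 0 → S.card = i) (hup : up x = 0) : x = 0 := by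
  set lam := n - 2 * i with hlamdef
  have hlam : n = lam + 2 * i := by omega
  have hlampos : 1 ≤ lam := by omega
  have hkey := key_iter hlam hx hup
  have hzero : ∀ k : ℕ, k ≤ i + 1 → down^[i + 1 - k] x = 0 := by
    intro k
    induction k with
    | zero =>
      intro _
      funext S
      by_contra hne
      have := isdeg_down_iter hx (i + 1) S (by simpa using hne)
      omega
    | succ k ih =>
      intro hk1
      have ihh := ih (by omega)
      have heq : i + 1 - k = (i - k) + 1 := by omega
      rw [heq] at ihh
      have := hkey (i - k)
      rw [ihh, up_zero] at this
      have hc : (-((((i - k) + 1) * (lam + (i - k)) : ℕ) : K)) ≠ 0 := by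
        simp only [ne_eq, neg_eq_zero, Nat.cast_eq_zero]
        positivity
      have h2 : i + 1 - (k + 1) = i - k := by omega
      rw [h2]
      exact (smul_eq_zero.mp this.symm).resolve_left hc
  have := hzero (i + 1) le_rfl
  simpa using this

/-- The complementation involution. -/
def cmap (x : M K n) : M K n := fun S => x Sᶜ

lemma up_cmap (z : M K n) : up (cmap z) = cmap (down z) := by
  funext T
  rw [up, cmap, down]
  rw [show Tᶜᶜ = T from compl_compl T]
  refine Finset.sum_congr rfl fun j hj => ?_
  rw [cmap]
  congr 1
  ext a
  simp only [Finset.mem_compl, Finset.mem_erase, Finset.mem_insert]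
  by_cases ha : a = j <;> simp [ha] <;> tauto

/-- Injectivity of `down` in high degrees. -/
lemma down_inj [CharZero K] {j : ℕ} (h1 : n < 2 * j) (h2 : j ≤ n) {z : M K n}
    (hz : ∀ S : Finset (Fin n), z S ≠ 0 → S.card = j) (hdz : down z = 0) : z = 0 := by
  have hc : ∀ S : Finset (Fin n), cmap z S ≠ 0 → S.card = n - j := by
    intro S hS
    have := hz Sᶜ hS
    have hcc := card_compl_eq S
    omega
  have hupc : up (cmap z) = 0 := by rw [up_cmap, hdz]; funext S; simp [cmap]
  have := up_inj (by omega) hc hupc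
  funext S
  have : cmap z Sᶜ = 0 := by rw [this]; rfl
  simpa [cmap] using this

/-- `up` as a linear map. -/
def upL : M K n →ₗ[K] M K n where
  toFun := up
  map_add' x y := by funext T; simp [up, Finset.sum_add_distrib]
  map_smul' c x := by funext T; simp [up, Finset.mul_sum]

/-- The submodule of elements of degree `i`. -/
def degSub (K : Type*) [Field K] (n i : ℕ) : Submodule K (M K n) where
  carrier := {x | ∀ S, S.card ≠ i → x S = 0}
  zero_mem' := fun S _ => rfl
  add_mem' hx hy S hS := by
    simp only [Pi.add_apply, hx S hS, hy S hS, add_zero]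
  smul_mem' c x hx S hS := by
    simp only [Pi.smul_apply, hx S hS, smul_zero]

/-- Adjointness of `up` and `down` for the standard pairing. -/
lemma adj (x z : M K n) : ∑ T, up x T * z T = ∑ S, x S * down z S := by
  have lhs : ∑ T, up x T * z T = ∑ T, ∑ j ∈ T, x (T.erase j) * z T := by
    refine Finset.sum_congr rfl fun T _ => ?_
    rw [up, Finset.sum_mul]
  have rhs : ∑ S, x S * down z S = ∑ S, ∑ j ∈ Sᶜ, x S * z (insert j S) := by
    refine Finset.sum_congr rfl fun S _ => ?_
    rw [down, Finset.mul_sum]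
  rw [lhs, rhs]
  rw [Finset.sum_sigma', Finset.sum_sigma']
  refine Finset.sum_bij' (fun p _ => ⟨p.1.erase p.2, p.2⟩)
    (fun q _ => ⟨insert q.2 q.1, q.2⟩) ?_ ?_ ?_ ?_ ?_
  · rintro ⟨T, j⟩ hp
    simp only [Finset.mem_sigma, Finset.mem_univ, true_and] at hp ⊢
    simp [Finset.mem_compl]
  · rintro ⟨S, j⟩ hq
    simp only [Finset.mem_sigma, Finset.mem_univ, true_and, Finset.mem_compl] at hq ⊢
    simp
  · rintro ⟨T, j⟩ hp
    simp only [Finset.mem_sigma, Finset.mem_univ, true_and] at hp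
    simp [Finset.insert_erase hp]
  · rintro ⟨S, j⟩ hq
    simp only [Finset.mem_sigma, Finset.mem_univ, true_and, Finset.mem_compl] at hq
    simp [Finset.erase_insert hq]
  · rintro ⟨T, j⟩ hp
    simp only [Finset.mem_sigma, Finset.mem_univ, true_and] at hp
    simp [Finset.insert_erase hp]

/-- Surjectivity of `up` in high degrees, over a char-zero field. -/
lemma up_surj [CharZero K] {i : ℕ} (h1 : n < 2 * (i + 1)) (h2 : i + 1 ≤ n) (y : M K n)
    (hy : ∀ S : Finset (Fin n), y S ≠ 0 → S.card = i + 1) :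
    ∃ x : M K n, (∀ S : Finset (Fin n), x S ≠ 0 → S.card = i) ∧ up x = y := by
  classical
  set U : Submodule K (M K n) := (degSub K n i).map upL with hU
  by_cases hyU : y ∈ U
  · obtain ⟨x, hx, hxy⟩ := hyU
    exact ⟨x, fun S hS => by by_contra h; exact hS (hx S h), hxy⟩
  exfalso
  have hq : (Submodule.Quotient.mk y : M K n ⧸ U) ≠ 0 := by
    simpa [Submodule.Quotient.mk_eq_zero] using hyU
  obtain ⟨φ₀, hφ₀⟩ : ∃ φ₀ : Module.Dual K (M K n ⧸ U),
      φ₀ (Submodule.Quotient.mk y) ≠ 0 := by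
    by_contra h
    push_neg at h
    exact hq ((Module.forall_dual_apply_eq_zero_iff K _).mp h)
  set φ : Module.Dual K (M K n) := φ₀.comp U.mkQ with hφdef
  have hφy : φ y ≠ 0 := by simpa [hφdef, Submodule.mkQ_apply] using hφ₀
  have hφU : ∀ u ∈ U, φ u = 0 := by
    intro u hu
    simp [hφdef, Submodule.mkQ_apply, (Submodule.Quotient.mk_eq_zero U).mpr hu]
  set g : M K n := fun S => φ (Pi.single S 1) with hg
  have hrep : ∀ v : M K n, φ v = ∑ S, v S * g S := by
    intro v
    conv_lhs => rw [← Finset.univ_sum_single v]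
    rw [map_sum]
    refine Finset.sum_congr rfl fun S _ => ?_
    have h1' : (Pi.single S (v S) : M K n) = v S • (Pi.single S 1 : M K n) := by
      funext S'
      by_cases h : S' = S
      · subst h; simp
      · simp [Pi.single_eq_of_ne h]
    rw [h1', map_smul, smul_eq_mul]
  have hdg : ∀ S : Finset (Fin n), S.card = i → down g S = 0 := by
    intro S hS
    have hδ : (Pi.single S (1 : K) : M K n) ∈ degSub K n i := by
      intro S' hS'
      have : S' ≠ S := fun h => hS' (h ▸ hS)
      exact Pi.single_eq_of_ne this 1
    have hupδ : φ (up (Pi.single S 1)) = 0 :=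
      hφU _ ⟨Pi.single S 1, hδ, rfl⟩
    rw [hrep, adj] at hupδ
    have : ∑ S', (Pi.single S (1:K) : M K n) S' * down g S' = down g S := by
      rw [Finset.sum_eq_single S]
      · simp
      · intro b _ hb
        simp [Pi.single_eq_of_ne hb]
      · simp
    rw [this] at hupδ
    exact hupδ
  set g' : M K n := fun S => if S.card = i + 1 then g S else 0 with hg'
  have hdg' : down g' = 0 := by
    funext S
    by_cases hS : S.card = i
    · have : down g' S = down g S := by
        rw [down, down]
        refine Finset.sum_congr rfl fun j hj => ?_
        have : (insert j S).card = i + 1 := by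
          rw [Finset.card_insert_of_notMem (Finset.mem_compl.mp hj), hS]
        simp [hg', this]
      rw [this, hdg S hS]; rfl
    · rw [down]
      refine Finset.sum_eq_zero fun j hj => ?_
      have : (insert j S).card ≠ i + 1 := by
        rw [Finset.card_insert_of_notMem (Finset.mem_compl.mp hj)]
        omega
      simp [hg', this]
  have hg'deg : ∀ S : Finset (Fin n), g' S ≠ 0 → S.card = i + 1 := by
    intro S h
    by_contra hc
    exact h (by simp [hg', hc])
  have hg'0 : g' = 0 := down_inj h1 h2 hg'deg hdg'
  apply hφy
  rw [hrep y]
  refine Finset.sum_eq_zero fun S _ => ?_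
  by_cases hc : S.card = i + 1
  · have h1' : g S = g' S := by simp [hg', hc]
    rw [h1', hg'0]
    simp
  · have : y S = 0 := by
      by_contra h
      exact hc (hy S h)
    simp [this]

open MvPolynomial

/-- The squarefree exponent associated to a subset. -/
noncomputable def eS (S : Finset (Fin n)) : Fin n →₀ ℕ := ∑ k ∈ S, Finsupp.single k 1

lemma eS_apply (S : Finset (Fin n)) (k : Fin n) :
    eS S k = if k ∈ S then 1 else 0 := by
  classical
  rw [eS, Finset.sum_apply']
  simp [Finsupp.single_apply]

lemma degree_eq_sum_univ (d : Fin n →₀ ℕ) : d.degree = ∑ k, d k := by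
  rw [Finsupp.degree]
  exact Finset.sum_subset (Finset.subset_univ _)
    (fun x _ hx => Finsupp.notMem_support_iff.mp hx)

lemma eS_degree (S : Finset (Fin n)) : (eS S).degree = S.card := by
  rw [degree_eq_sum_univ]
  simp only [eS_apply]
  rw [Finset.sum_ite_mem, Finset.univ_inter, Finset.sum_const, smul_eq_mul, mul_one]

lemma eS_inj {S S' : Finset (Fin n)} (h : eS S = eS S') : S = S' := by
  ext k
  have := congrArg (fun d => d k) h
  simp only [eS_apply] at this
  by_cases h1 : k ∈ S <;> by_cases h2 : k ∈ S' <;> simp [h1, h2] at this ⊢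

lemma eS_erase {k : Fin n} {S : Finset (Fin n)} (hk : k ∈ S) :
    eS S - Finsupp.single k 1 = eS (S.erase k) := by
  ext a
  rw [Finsupp.tsub_apply]
  simp only [eS_apply, Finsupp.single_apply, Finset.mem_erase]
  by_cases ha : a = k
  · subst ha; simp [hk]
  · simp [ha, Ne.symm ha]

/-- Reading off the squarefree coefficients of a polynomial. -/
noncomputable def psi (p : MvPolynomial (Fin n) K) : M K n := fun S => coeff (eS S) p

lemma psi_sub (p q : MvPolynomial (Fin n) K) : psi (p - q) = psi p - psi q := by
  funext S; simp [psi, coeff_sub]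

lemma psi_lmul (p : MvPolynomial (Fin n) K) :
    psi ((∑ k, X k) * p) = up (psi p) := by
  classical
  funext S
  rw [psi, Finset.sum_mul, coeff_sum]
  have : ∀ k : Fin n, coeff (eS S) (X k * p)
      = if k ∈ S then psi p (S.erase k) else 0 := by
    intro k
    rw [coeff_X_mul']
    have hsupp : k ∈ (eS S).support ↔ k ∈ S := by
      rw [Finsupp.mem_support_iff, eS_apply]
      by_cases h : k ∈ S <;> simp [h]
    by_cases h : k ∈ S
    · rw [if_pos (hsupp.mpr h), if_pos h, eS_erase h, psi]
    · rw [if_neg (fun hc => h (hsupp.mp hc)), if_neg h]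
  rw [Finset.sum_congr rfl fun k _ => this k]
  rw [Finset.sum_ite_mem, Finset.univ_inter]
  rfl

lemma psi_deg {p : MvPolynomial (Fin n) K} {i : ℕ} (hp : p.IsHomogeneous i) :
    ∀ S : Finset (Fin n), psi p S ≠ 0 → S.card = i := by
  intro S h
  have := hp h
  rw [← show (Finsupp.degree : (Fin n →₀ ℕ) →+ ℕ) = Finsupp.weight (1 : Fin n → ℕ) from Finsupp.degree_eq_weight_one, eS_degree] at this
  exact_mod_cast this

/-- Building a squarefree polynomial from model data. -/
noncomputable def phi (x : M K n) : MvPolynomial (Fin n) K := ∑ S, monomial (eS S) (x S)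

lemma psi_phi (x : M K n) : psi (phi x) = x := by
  classical
  funext S
  rw [psi, phi, coeff_sum]
  rw [Finset.sum_eq_single S]
  · simp [coeff_monomial]
  · intro S' _ hS'
    rw [coeff_monomial, if_neg (fun h => hS' (eS_inj h))]
  · simp

lemma phi_homog {x : M K n} {i : ℕ} (hx : ∀ S : Finset (Fin n), x S ≠ 0 → S.card = i) :
    (phi x).IsHomogeneous i := by
  apply IsHomogeneous.sum
  intro S _
  by_cases h : x S = 0
  · rw [h, map_zero]; exact isHomogeneous_zero _ _ _
  · exact isHomogeneous_monomial _ (by rw [eS_degree, hx S h])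

/-- The index set of the long monomial generator. -/
def Fgen (n : ℕ) : Finset (Fin n) := Finset.univ.filter (fun k : Fin n => (k : ℕ) < n - 1)

lemma card_Fgen (hn : 1 ≤ n) : (Fgen n).card = n - 1 := by
  have hlt : n - 1 < n := by omega
  have : Fgen n = Finset.univ.erase ⟨n - 1, hlt⟩ := by
    ext k
    simp only [Fgen, Finset.mem_filter, Finset.mem_univ, true_and, Finset.mem_erase,
      and_true, ne_eq, Fin.ext_iff]
    have := k.isLt
    constructor
    · intro h; omega
    · intro h; omega
  rw [this, Finset.card_erase_of_mem (Finset.mem_univ _)]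
  simp

/-- The generating exponents of the ideal. -/
def Egen (n : ℕ) : Set (Fin n →₀ ℕ) :=
  (Set.range fun k : Fin n => Finsupp.single k 2) ∪ {eS (Fgen n)}

lemma ideal_eq (K : Type*) [Field K] (n : ℕ) :
    cycleInitIdeal K n = Ideal.span ((fun s => monomial s (1 : K)) '' Egen n) := by
  unfold cycleInitIdeal Egen
  congr 1
  rw [Set.image_union, Set.image_singleton]
  congr 1
  · rw [← Set.range_comp]
    refine congrArg _ (funext fun k => ?_)
    simp only [Function.comp_apply]
    rw [X_pow_eq_monomial]
  · refine congrArg _ ?_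
    rw [← Fgen]
    induction (Fgen n) using Finset.induction with
    | empty => simp [eS]
    | @insert b s hb ih =>
      have he : eS (insert b s) = Finsupp.single b 1 + eS s := by
        rw [eS, Finset.sum_insert hb, ← eS]
      rw [Finset.prod_insert hb, ih, he, X, monomial_mul, one_mul, add_comm]

lemma mem_of_psi_zero {p : MvPolynomial (Fin n) K} (hp : CycleWLP.psi p = 0) :
    p ∈ cycleInitIdeal K n := by
  classical
  rw [ideal_eq, mem_ideal_span_monomial_image]
  intro m hm
  by_cases hsq : ∃ k, 2 ≤ m k
  · obtain ⟨k, hk⟩ := hsq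
    exact ⟨Finsupp.single k 2, Or.inl ⟨k, rfl⟩, Finsupp.single_le_iff.mpr hk⟩
  · exfalso
    push_neg at hsq
    have hmeq : m = eS m.support := by
      ext k
      rw [eS_apply]
      by_cases h : k ∈ m.support
      · have h1 := Finsupp.mem_support_iff.mp h
        have h2 := hsq k
        rw [if_pos h]
        omega
      · rw [if_neg h]
        exact Finsupp.notMem_support_iff.mp h
    have := Finsupp.mem_support_iff.mp hm
    rw [hmeq] at this
    exact this (congrFun hp m.support)

lemma psi_zero_of_mem {p : MvPolynomial (Fin n) K} {d : ℕ} (hd : d + 2 ≤ n)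
    (hp : p.IsHomogeneous d) (hmem : p ∈ cycleInitIdeal K n) : CycleWLP.psi p = 0 := by
  classical
  funext S
  by_contra h
  have hsupp : eS S ∈ p.support := Finsupp.mem_support_iff.mpr h
  rw [ideal_eq, mem_ideal_span_monomial_image] at hmem
  obtain ⟨s, hs, hsle⟩ := hmem _ hsupp
  have hcard : S.card = d := psi_deg hp S h
  rcases hs with ⟨k, rfl⟩ | hs
  · have := hsle k
    rw [Finsupp.single_apply, if_pos rfl, eS_apply] at this
    by_cases hk : k ∈ S <;> simp [hk] at this
  · rw [Set.mem_singleton_iff] at hs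
    subst hs
    have hFS : Fgen n ⊆ S := by
      intro k hk
      have := hsle k
      rw [eS_apply, if_pos hk, eS_apply] at this
      by_cases h' : k ∈ S
      · exact h'
      · simp [h'] at this
    have := Finset.card_le_card hFS
    rw [card_Fgen (by omega), hcard] at this
    omega

lemma mem_of_deg_ge {p : MvPolynomial (Fin n) K} {d : ℕ} (hd : n ≤ d)
    (hp : p.IsHomogeneous d) : p ∈ cycleInitIdeal K n := by
  classical
  rw [ideal_eq, mem_ideal_span_monomial_image]
  intro m hm
  by_cases hsq : ∃ k, 2 ≤ m k
  · obtain ⟨k, hk⟩ := hsq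
    exact ⟨Finsupp.single k 2, Or.inl ⟨k, rfl⟩, Finsupp.single_le_iff.mpr hk⟩
  · push_neg at hsq
    refine ⟨eS (Fgen n), Or.inr rfl, ?_⟩
    have hdeg : m.degree = d := by
      have := hp (Finsupp.mem_support_iff.mp hm)
      rw [← show (Finsupp.degree : (Fin n →₀ ℕ) →+ ℕ) = Finsupp.weight (1 : Fin n → ℕ) from Finsupp.degree_eq_weight_one] at this
      exact_mod_cast this
    have hsum : ∑ k, m k = d := by rw [← degree_eq_sum_univ, hdeg]
    have hall : ∀ k, m k = 1 := by
      intro k0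
      by_contra hk0
      have h0 : m k0 = 0 := by have := hsq k0; omega
      have : ∑ k, m k ≤ (Finset.univ.erase k0).card * 1 := by
        rw [← Finset.add_sum_erase _ _ (Finset.mem_univ k0), h0, zero_add]
        exact Finset.sum_le_card_nsmul _ _ 1 (fun k _ => by have := hsq k; omega)
      rw [hsum, Finset.card_erase_of_mem (Finset.mem_univ _)] at this
      simp only [Finset.card_univ, Fintype.card_fin, mul_one] at this
      have hn0 : 0 < n := k0.pos
      omega
    intro k
    rw [eS_apply, hall k]
    split <;> omega

end CycleWLP

open CycleWLP

/-- The Artinian algebra `C = K[y_1,…,y_n]/(y_1^2,…,y_n^2, y_1 y_2 ⋯ y_{n-1})`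
(the initial ideal of the AOT algebra of the `n`-cycle) has the Weak Lefschetz
Property in characteristic 0: there is a linear form `ℓ` such that every
multiplication map `μ_ℓ : C_i → C_{i+1}` is injective or surjective. -/
theorem stmt5 {K : Type*} [Field K] [CharZero K] (n : ℕ) (hn : 3 ≤ n) :
    ∃ ℓ ∈ gradedPiece (cycleInitIdeal K n) 1, ∀ i : ℕ,
      (∀ x ∈ gradedPiece (cycleInitIdeal K n) i, ℓ * x = 0 → x = 0) ∨
      (∀ y ∈ gradedPiece (cycleInitIdeal K n) (i + 1),
        ∃ x ∈ gradedPiece (cycleInitIdeal K n) i, ℓ * x = y) := by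
  classical
  set I := cycleInitIdeal K n with hI
  set ℓp : MvPolynomial (Fin n) K := ∑ k, X k with hℓp
  have hℓhom : ℓp.IsHomogeneous 1 :=
    IsHomogeneous.sum _ _ _ (fun k _ => isHomogeneous_X _ _)
  refine ⟨(Ideal.Quotient.mkₐ K I).toLinearMap ℓp, ⟨ℓp, hℓhom, rfl⟩, ?_⟩
  intro i
  by_cases hbig : n ≤ i + 1
  · right
    rintro y ⟨q, hq, rfl⟩
    refine ⟨0, ⟨0, isHomogeneous_zero _ _ _, map_zero _⟩, ?_⟩
    rw [mul_zero]
    symm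
    have hq' : MvPolynomial.IsHomogeneous q (i + 1) := hq
    simp only [AlgHom.toLinearMap_apply, Ideal.Quotient.mkₐ_eq_mk]
    rw [Ideal.Quotient.eq_zero_iff_mem]
    exact mem_of_deg_ge hbig hq'
  · by_cases hsur : n ≤ 2 * i + 1
    · right
      rintro y ⟨q, hq, rfl⟩
      have hq' : MvPolynomial.IsHomogeneous q (i + 1) := hq
      obtain ⟨x, hxdeg, hxup⟩ := up_surj (K := K) (n := n) (i := i)
        (by omega) (by omega) (psi q) (psi_deg hq')
      refine ⟨(Ideal.Quotient.mkₐ K I).toLinearMap (phi x),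
        ⟨phi x, phi_homog hxdeg, rfl⟩, ?_⟩
      simp only [AlgHom.toLinearMap_apply, Ideal.Quotient.mkₐ_eq_mk]
      rw [← map_mul, Ideal.Quotient.mk_eq_mk_iff_sub_mem]
      apply mem_of_psi_zero
      rw [psi_sub, psi_lmul, psi_phi, hxup, sub_self]
    · left
      rintro x ⟨p, hp, rfl⟩ hx0
      have hp' : MvPolynomial.IsHomogeneous p i := hp
      simp only [AlgHom.toLinearMap_apply, Ideal.Quotient.mkₐ_eq_mk] at hx0 ⊢
      rw [← map_mul, Ideal.Quotient.eq_zero_iff_mem] at hx0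
      have hhom : (ℓp * p).IsHomogeneous (1 + i) := hℓhom.mul hp'
      have hψ : psi (ℓp * p) = 0 :=
        psi_zero_of_mem (d := 1 + i) (by omega) hhom hx0
      rw [hℓp] at hψ
      rw [psi_lmul] at hψ
      have hp0 : psi p = 0 := up_inj (by omega) (psi_deg hp') hψ
      rw [Ideal.Quotient.eq_zero_iff_mem]
      exact mem_of_psi_zero hp0
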